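/- Assume C_R ⊆ m_R². Then R ⊆ S, the quotient S/R is a k-vector space (it is killed by m_R), and dim_k (S/R) = s(R), where s(R) = dim_k (C_R + x₁R)/(x₁R) is the reduced type of R. -/

import Mathlib

open PowerSeries
set_option synthInstance.maxHeartbeats 1000000
set_option maxHeartbeats 1000000

noncomputable section

def mxl {k : Type*} [Field k] (R : Subalgebra k (PowerSeries k)) : Ideal R :=
  RingHom.ker ((constantCoeff : PowerSeries k →+* k).comp R.val.toRingHom)

def condIdeal {k : Type*} [Field k] (R : Subalgebra k (PowerSeries k)) : Ideal R where
  carrier := {r : R | ∀ g : PowerSeries k, (r : PowerSeries k) * g ∈ R}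
  add_mem' := by
    intro a b ha hb g
    have := R.add_mem (ha g) (hb g)
    simpa [add_mul] using this
  zero_mem' := by
    intro g
    simpa using R.zero_mem
  smul_mem' := by
    intro c x hx g
    have h : ((c • x : R) : PowerSeries k) * g
        = (c : PowerSeries k) * ((x : PowerSeries k) * g) := by
      rw [smul_eq_mul, MulMemClass.coe_mul]
      ring
    rw [h]
    exact R.mul_mem c.2 (hx g)

/-- The reduced type `s(R) = dim_k (C_R + x₁R)/(x₁R)`, computed as the dimension of the
image of the conductor in `R/(x₁)`. -/
def redType {k : Type*} [Field k] (R : Subalgebra k (PowerSeries k)) (x1 : R) : ℕ :=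
  Module.finrank k (Submodule.restrictScalars k
    (Ideal.map (Ideal.Quotient.mk (Ideal.span {x1})) (condIdeal R)))

set_option maxHeartbeats 8000000 in
lemma stmt7aux {k : Type*} [Field k]
    (R : Subalgebra k (PowerSeries k)) (x1 : PowerSeries k) (hx1R : x1 ∈ R)
    (hxne : x1 ≠ 0)
    (S : Subalgebra k (PowerSeries k))
    (hSmem : ∀ f : PowerSeries k, f ∈ S ↔ ∃ r ∈ (R : Set (PowerSeries k)),
      ∃ v ∈ {h : PowerSeries k | ∀ g : PowerSeries k, (x1 * h) * g ∈ R}, f = r + v)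
    (hconduct : ∀ c : PowerSeries k, (∀ g : PowerSeries k, c * g ∈ R) → x1 ∣ c) :
    Module.finrank k ((Subalgebra.toSubmodule S) ⧸
        ((Subalgebra.toSubmodule R).comap (Subalgebra.toSubmodule S).subtype))
      = redType R ⟨x1, hx1R⟩ := by
  classical
  -- Part 3
  set x1R : R := (⟨x1, hx1R⟩ : R) with hx1Rdef
  set J : Ideal R := Ideal.span {x1R} with hJdef
  set D : Submodule k R := Submodule.restrictScalars k (condIdeal R) with hDdef
  set R' : Submodule k (Subalgebra.toSubmodule S) :=
    ((Subalgebra.toSubmodule R).comap (Subalgebra.toSubmodule S).subtype) with hR'def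
  have memCond : ∀ c : R, c ∈ condIdeal R ↔
      ∀ g : PowerSeries k, (c : PowerSeries k) * g ∈ R := fun _ => Iff.rfl
  -- division of conductor elements by x1
  have hdiv : ∀ c : D, ∃ h : PowerSeries k, ((c : R) : PowerSeries k) = x1 * h := by
    intro c
    exact hconduct _ ((memCond _).mp c.2)
  choose d hd using hdiv
  have hdV : ∀ c : D,
      d c ∈ {h : PowerSeries k | ∀ g : PowerSeries k, (x1 * h) * g ∈ R} := by
    intro c g
    rw [← hd c]
    exact (memCond _).mp c.2 g
  have hdS : ∀ c : D, d c ∈ S := by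
    intro c
    exact (hSmem _).mpr ⟨0, R.zero_mem, d c, hdV c, by ring⟩
  have hdadd : ∀ a b : D, d (a + b) = d a + d b := by
    intro a b
    apply mul_left_cancel₀ hxne
    rw [← hd (a + b), mul_add, ← hd a, ← hd b]
    push_cast
    ring
  have hdsmul : ∀ (s : k) (a : D), d (s • a) = s • d a := by
    intro s a
    apply mul_left_cancel₀ hxne
    rw [← hd (s • a)]
    have h1 : (((s • a : D) : R) : PowerSeries k) = s • ((a : R) : PowerSeries k) := by
      norm_cast
    rw [h1, hd a, mul_smul_comm]
  -- the map Θ : D → S/R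
  have hmkadd : ∀ a b : D, (⟨d (a + b), hdS (a + b)⟩ : Subalgebra.toSubmodule S)
      = ⟨d a, hdS a⟩ + ⟨d b, hdS b⟩ := fun a b => Subtype.ext (hdadd a b)
  have hmksmul : ∀ (s : k) (a : D), (⟨d (s • a), hdS (s • a)⟩ : Subalgebra.toSubmodule S)
      = s • ⟨d a, hdS a⟩ := fun s a => Subtype.ext (hdsmul s a)
  let Θ : D →ₗ[k] ((Subalgebra.toSubmodule S) ⧸ R') :=
    { toFun := fun c => Submodule.Quotient.mk ⟨d c, hdS c⟩
      map_add' := by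
        intro a b
        show Submodule.Quotient.mk (⟨d (a + b), hdS (a + b)⟩ : Subalgebra.toSubmodule S)
          = Submodule.Quotient.mk (⟨d a, hdS a⟩ : Subalgebra.toSubmodule S)
            + Submodule.Quotient.mk (⟨d b, hdS b⟩ : Subalgebra.toSubmodule S)
        rw [hmkadd a b, Submodule.Quotient.mk_add]
      map_smul' := by
        intro s a
        show Submodule.Quotient.mk (⟨d (s • a), hdS (s • a)⟩ : Subalgebra.toSubmodule S)
          = s • Submodule.Quotient.mk (⟨d a, hdS a⟩ : Subalgebra.toSubmodule S)
        rw [hmksmul s a, Submodule.Quotient.mk_smul] }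
  have hΘsurj : Function.Surjective Θ := by
    intro x
    obtain ⟨⟨f, hfS⟩, rfl⟩ := Submodule.Quotient.mk_surjective _ x
    obtain ⟨r, hr, v, hv, rfl⟩ := (hSmem f).mp hfS
    have hx1v : x1 * v ∈ R := by
      have := hv 1
      rwa [mul_one] at this
    have hcI : (⟨x1 * v, hx1v⟩ : R) ∈ condIdeal R := (memCond _).mpr (fun g => hv g)
    set C : D := ⟨⟨x1 * v, hx1v⟩, hcI⟩ with hCdef
    refine ⟨C, ?_⟩
    have hdc : d C = v := by
      apply mul_left_cancel₀ hxne
      exact (hd C).symm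
    show Submodule.Quotient.mk (⟨d C, hdS C⟩ : Subalgebra.toSubmodule S)
      = Submodule.Quotient.mk (⟨r + v, hfS⟩ : Subalgebra.toSubmodule S)
    rw [Submodule.Quotient.eq, Submodule.mem_comap]
    show d C - (r + v) ∈ R
    rw [hdc]
    have hvr : v - (r + v) = -r := by ring
    rw [hvr]
    exact R.neg_mem hr
  -- the map Θ' : D → image of conductor in R/(x1)
  let Θ' : D →ₗ[k] (Submodule.restrictScalars k
      (Ideal.map (Ideal.Quotient.mk J) (condIdeal R))) :=
    { toFun := fun c => ⟨Ideal.Quotient.mk J (c : R), Ideal.mem_map_of_mem _ c.2⟩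
      map_add' := by
        intro a b
        apply Subtype.ext
        show Ideal.Quotient.mk J ((a : R) + (b : R)) = _
        rw [map_add]
        rfl
      map_smul' := by
        intro s a
        apply Subtype.ext
        show Ideal.Quotient.mk J (s • (a : R)) = s • Ideal.Quotient.mk J (a : R)
        rw [← Ideal.Quotient.mk_eq_mk, ← Ideal.Quotient.mk_eq_mk,
          Submodule.Quotient.mk_smul (J : Submodule R R) s ((a : R) : R)] }
  have hΘ'surj : Function.Surjective Θ' := by
    rintro ⟨y, hy⟩
    rw [Submodule.restrictScalars_mem,
      Ideal.mem_map_iff_of_surjective _ Ideal.Quotient.mk_surjective] at hy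
    obtain ⟨x, hxI, rfl⟩ := hy
    exact ⟨⟨x, hxI⟩, rfl⟩
  -- the kernels agree
  have hker : LinearMap.ker Θ = LinearMap.ker Θ' := by
    ext c
    simp only [LinearMap.mem_ker]
    constructor
    · intro h
      have hdR : d c ∈ R := by
        have := (Submodule.Quotient.mk_eq_zero R').mp h
        exact this
      apply Subtype.ext_iff.mpr
      show (Ideal.Quotient.mk J (c : R) : R ⧸ J) = 0
      rw [Ideal.Quotient.eq_zero_iff_mem, hJdef, Ideal.mem_span_singleton]
      exact ⟨⟨d c, hdR⟩, Subtype.ext (hd c)⟩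
    · intro h
      have h0 : (Ideal.Quotient.mk J (c : R) : R ⧸ J) = 0 := Subtype.ext_iff.mp h
      rw [Ideal.Quotient.eq_zero_iff_mem, hJdef, Ideal.mem_span_singleton] at h0
      obtain ⟨r, hr⟩ := h0
      have hrc : ((c : R) : PowerSeries k) = x1 * (r : PowerSeries k) := by
        rw [hr]; rfl
      have hdr : d c = (r : PowerSeries k) := by
        apply mul_left_cancel₀ hxne
        rw [← hd c, hrc]
      apply (Submodule.Quotient.mk_eq_zero R').mpr
      show d c ∈ R
      rw [hdr]
      exact r.2
  -- assemble
  have e1 := LinearMap.quotKerEquivOfSurjective (R := k) (M := D) (M₂ := (Subalgebra.toSubmodule S) ⧸ R') Θ hΘsurj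
  have e2 := LinearMap.quotKerEquivOfSurjective (R := k) (M := D)
    (M₂ := Submodule.restrictScalars k (Ideal.map (Ideal.Quotient.mk J) (condIdeal R))) Θ' hΘ'surj
  rw [hker] at e1
  have hfr := (e1.symm.trans e2).finrank_eq
  unfold redType
  exact hfr



theorem stmt7 {k : Type*} [Field k] [IsAlgClosed k] [CharZero k]
    (R : Subalgebra k (PowerSeries k)) (hR : R ≠ ⊤)
    (hN : ∃ N : ℕ, 1 ≤ N ∧ ∀ g : PowerSeries k, (X : PowerSeries k) ^ N * g ∈ R)
    (a1 : ℕ) (ha1pos : 0 < a1) (x1 : PowerSeries k) (hx1R : x1 ∈ R)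
    (hx1ord : x1.order = a1)
    (ha1min : ∀ f ∈ R, f ≠ 0 → (constantCoeff : PowerSeries k →+* k) f = 0 → (a1 : ℕ∞) ≤ f.order)
    (hC : ∀ r : R, (∀ g : PowerSeries k, (r : PowerSeries k) * g ∈ R) → r ∈ (mxl R) ^ 2)
    (S : Subalgebra k (PowerSeries k))
    (hS : S = Algebra.adjoin k ((R : Set (PowerSeries k)) ∪
        {h : PowerSeries k | ∀ g : PowerSeries k, (x1 * h) * g ∈ R})) :
    -- R ⊆ S
    (R : Set (PowerSeries k)) ⊆ (S : Set (PowerSeries k)) ∧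
    -- S/R is killed by m_R (so it is a k-vector space)
    (∀ m ∈ R, (constantCoeff : PowerSeries k →+* k) m = 0 → ∀ f ∈ S, m * f ∈ R) ∧
    -- dim_k (S/R) = s(R)
    Module.finrank k ((Subalgebra.toSubmodule S) ⧸
        ((Subalgebra.toSubmodule R).comap (Subalgebra.toSubmodule S).subtype))
      = redType R ⟨x1, hx1R⟩ := by
  classical
  set V : Set (PowerSeries k) :=
    {h : PowerSeries k | ∀ g : PowerSeries k, (x1 * h) * g ∈ R} with hVdef
  -- x1 is nonzero
  have hxne : x1 ≠ 0 := by
    intro h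
    rw [h, order_zero] at hx1ord
    exact (WithTop.top_ne_coe (a := a1)) hx1ord
  -- divisibility by x1 from order bound
  have hdvd_ord : ∀ g : PowerSeries k, (a1 : ℕ∞) ≤ g.order → x1 ∣ g := by
    intro g hg
    have hXdvd : (X : PowerSeries k) ^ a1 ∣ g := by
      rw [X_pow_dvd_iff]
      intro m hm
      apply coeff_of_lt_order
      exact lt_of_lt_of_le (by exact_mod_cast hm) hg
    have hlift : (x1.order).lift (order_finite_iff_ne_zero.mpr hxne) = a1 := by
      have h2 := (ENat.coe_lift (x1.order) (order_finite_iff_ne_zero.mpr hxne)).trans hx1ord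
      exact_mod_cast h2
    have hfac : (X : PowerSeries k) ^ a1 * divXPowOrder x1 = x1 := by
      have := X_pow_order_mul_divXPowOrder (f := x1)
      rwa [hx1ord, ENat.toNat_coe] at this
    have hunit : IsUnit (divXPowOrder x1) :=
      IsUnit.of_mul_eq_one _ (Inv_divided_by_X_pow_order_rightInv hxne)
    obtain ⟨u, hu⟩ := hunit
    have hassoc : Associated ((X : PowerSeries k) ^ a1) x1 := ⟨u, by rw [hu, hfac]⟩
    exact dvd_trans hassoc.symm.dvd hXdvd
  -- elements of the conductor are divisible by x1
  have hconduct : ∀ c : PowerSeries k, (∀ g : PowerSeries k, c * g ∈ R) → x1 ∣ c := by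
    intro c hc
    by_cases hc0 : c = 0
    · simp [hc0]
    have hcR : c ∈ R := by simpa using hc 1
    have hconst : (constantCoeff : PowerSeries k →+* k) c = 0 := by
      by_contra hne
      have hcu : IsUnit c := by
        rw [isUnit_iff_constantCoeff]
        exact isUnit_iff_ne_zero.mpr hne
      obtain ⟨u, hu⟩ := hcu
      apply hR
      rw [eq_top_iff]
      intro f _
      have : c * ((↑u⁻¹ : PowerSeries k) * f) ∈ R := hc _
      have heq : c * ((↑u⁻¹ : PowerSeries k) * f) = f := by
        rw [← hu, ← mul_assoc, Units.mul_inv, one_mul]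
      rwa [heq] at this
    exact hdvd_ord c (ha1min c hcR hc0 hconst)
  -- basic facts about V
  have hV0 : (0 : PowerSeries k) ∈ V := by
    intro g
    simpa using R.zero_mem
  have hVadd : ∀ v ∈ V, ∀ w ∈ V, v + w ∈ V := by
    intro v hv w hw g
    have : x1 * (v + w) * g = x1 * v * g + x1 * w * g := by ring
    rw [this]
    exact R.add_mem (hv g) (hw g)
  have hVmulR : ∀ r ∈ R, ∀ v ∈ V, r * v ∈ V := by
    intro r hr v hv g
    have : x1 * (r * v) * g = (x1 * v * g) * r := by ring
    rw [this]
    exact R.mul_mem (hv g) hr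
  have hVmulV : ∀ v ∈ V, ∀ w ∈ V, v * w ∈ V := by
    intro v hv w hw g
    have : x1 * (v * w) * g = x1 * v * (w * g) := by ring
    rw [this]
    exact hv (w * g)
  -- the subalgebra R + V
  let T : Subalgebra k (PowerSeries k) :=
    { carrier := {f : PowerSeries k | ∃ r ∈ (R : Set (PowerSeries k)), ∃ v ∈ V, f = r + v}
      mul_mem' := by
        rintro a b ⟨r, hr, v, hv, rfl⟩ ⟨r', hr', v', hv', rfl⟩
        refine ⟨r * r', R.mul_mem hr hr', r * v' + (r' * v + v * v'), ?_, by ring⟩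
        exact hVadd _ (hVmulR r hr v' hv') _ (hVadd _ (hVmulR r' hr' v hv) _ (hVmulV v hv v' hv'))
      one_mem' := ⟨1, R.one_mem, 0, hV0, by ring⟩
      add_mem' := by
        rintro a b ⟨r, hr, v, hv, rfl⟩ ⟨r', hr', v', hv', rfl⟩
        exact ⟨r + r', R.add_mem hr hr', v + v', hVadd _ hv _ hv', by ring⟩
      zero_mem' := ⟨0, R.zero_mem, 0, hV0, by ring⟩
      algebraMap_mem' := fun s => ⟨algebraMap k _ s, R.algebraMap_mem s, 0, hV0, by ring⟩ }
  have hST : S = T := by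
    rw [hS]
    apply le_antisymm
    · apply Algebra.adjoin_le
      rintro f (hf | hf)
      · exact ⟨f, hf, 0, hV0, by ring⟩
      · exact ⟨0, R.zero_mem, f, hf, by ring⟩
    · rintro f ⟨r, hr, v, hv, rfl⟩
      exact add_mem (Algebra.subset_adjoin (Or.inl hr)) (Algebra.subset_adjoin (Or.inr hv))
  have hSmem : ∀ f : PowerSeries k, f ∈ S ↔
      ∃ r ∈ (R : Set (PowerSeries k)), ∃ v ∈ V, f = r + v := by
    intro f; rw [hST]; rfl
  -- Part 1
  have part1 : (R : Set (PowerSeries k)) ⊆ (S : Set (PowerSeries k)) := by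
    intro f hf
    exact (hSmem f).mpr ⟨f, hf, 0, hV0, by ring⟩
  -- Part 2
  have part2 : ∀ m ∈ R, (constantCoeff : PowerSeries k →+* k) m = 0 → ∀ f ∈ S, m * f ∈ R := by
    intro m hm hm0 f hf
    obtain ⟨r, hr, v, hv, rfl⟩ := (hSmem f).mp hf
    have h1 : m * r ∈ R := R.mul_mem hm hr
    have h2 : m * v ∈ R := by
      by_cases hm' : m = 0
      · rw [hm', zero_mul]; exact R.zero_mem
      obtain ⟨q, hq⟩ := hdvd_ord m (ha1min m hm hm' hm0)
      have : m * v = x1 * v * q := by rw [hq]; ring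
      rw [this]
      exact hv q
    have : m * (r + v) = m * r + m * v := by ring
    rw [this]
    exact R.add_mem h1 h2
  refine ⟨part1, part2, ?_⟩
  exact stmt7aux R x1 hx1R hxne S hSmem hconduct

end
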